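/- arXiv:2204.06842 — 6 statements merged into one kernel-verified Lean document; each statement's English description precedes it below -/
import Mathlib

section
/- A graph G is chordal if and only if every minimal vertex separator of G is a clique of G. -/
variable {V : Type*}

/-- `f : ZMod n → V` realizes an induced cycle of length `n` in `G`. -/
def IsInducedCycleMap (G : SimpleGraph V) (n : ℕ) (f : ZMod n → V) : Prop :=
  Function.Injective f ∧ ∀ i j : ZMod n, G.Adj (f i) (f j) ↔ (j = i + 1 ∨ i = j + 1)

/-- A graph is chordal if it has no induced cycle of length at least four. -/
def Chordal (G : SimpleGraph V) : Prop :=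
  ∀ n : ℕ, 4 ≤ n → ¬ ∃ f : ZMod n → V, IsInducedCycleMap G n f

/-- `S` is a vertex separator of `G`: two vertices outside `S` lie in distinct
connected components of `G - S`. -/
def IsSeparator (G : SimpleGraph V) (S : Set V) : Prop :=
  ∃ u w : ↥(Sᶜ), ¬ (G.induce Sᶜ).Reachable u w

/-- `S` is a minimal vertex separator of `G`. -/
def IsMinimalSeparator (G : SimpleGraph V) (S : Set V) : Prop :=
  ∃ (u w : V) (hu : u ∈ Sᶜ) (hw : w ∈ Sᶜ),
    (¬ (G.induce Sᶜ).Reachable ⟨u, hu⟩ ⟨w, hw⟩) ∧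
    ∀ (S' : Set V) (hss : S' ⊂ S),
      (G.induce S'ᶜ).Reachable
        ⟨u, Set.compl_subset_compl.mpr hss.subset hu⟩
        ⟨w, Set.compl_subset_compl.mpr hss.subset hw⟩


namespace ChordalAux
open SimpleGraph Walk

variable {G : SimpleGraph V}

/-- take the first `n` darts of a walk -/
def wtake {u v : V} : (p : G.Walk u v) → (n : ℕ) → G.Walk u (p.getVert n)
  | p, 0 => Walk.nil.copy rfl (p.getVert_zero).symm
  | Walk.nil, _ + 1 => Walk.nil
  | Walk.cons h q, n + 1 => Walk.cons h (wtake q n)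

@[simp] lemma length_wtake {u v : V} (p : G.Walk u v) (n : ℕ) :
    (wtake p n).length = min n p.length := by
  induction p generalizing n with
  | nil => cases n <;> simp [wtake]
  | cons h q ih =>
    cases n with
    | zero => simp [wtake]
    | succ n => simp [wtake, ih, Nat.succ_min_succ]

lemma getVert_wtake {u v : V} (p : G.Walk u v) (n i : ℕ) (hi : i ≤ n) :
    (wtake p n).getVert i = p.getVert i := by
  induction p generalizing n i with
  | nil => cases n <;> cases i <;> simp [wtake]
  | cons h q ih =>
    cases n with
    | zero => interval_cases i; simp [wtake]
    | succ n =>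
      cases i with
      | zero => simp [wtake]
      | succ i => simpa [wtake] using ih n i (Nat.succ_le_succ_iff.mp hi)

lemma support_wtake_subset {u v : V} (p : G.Walk u v) (n : ℕ) :
    (wtake p n).support ⊆ p.support := by
  induction p generalizing n with
  | nil => cases n <;> simp [wtake]
  | cons h q ih =>
    cases n with
    | zero => intro z hz; simp [wtake] at hz; simp [hz]
    | succ n =>
      intro z hz
      simp only [wtake, support_cons, List.mem_cons] at hz ⊢
      change z ∈ (cons h (wtake q n)).support at hz
      rw [support_cons, List.mem_cons] at hz
      exact hz.imp id (fun hz => ih n hz)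

@[simp] lemma length_drop {u v : V} (p : G.Walk u v) (n : ℕ) :
    (p.drop n).length = p.length - n := by
  induction p generalizing n with
  | nil => cases n <;> simp [Walk.drop]
  | cons h q ih =>
    cases n with
    | zero => simp [Walk.drop]
    | succ n => simp [Walk.drop, ih]

lemma getVert_drop {u v : V} (p : G.Walk u v) (n i : ℕ) :
    (p.drop n).getVert i = p.getVert (n + i) := by
  induction p generalizing n with
  | nil =>
    cases n <;> simp [Walk.drop] <;>
      exact Walk.getVert_of_length_le _ (by simp)
  | cons h q ih =>
    cases n with
    | zero => simp [Walk.drop]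
    | succ n =>
      rw [show n + 1 + i = (n + i) + 1 from by omega]
      simp only [Walk.drop, getVert_copy, ih, Walk.getVert_cons_succ]

lemma support_drop_subset {u v : V} (p : G.Walk u v) (n : ℕ) :
    (p.drop n).support ⊆ p.support := by
  induction p generalizing n with
  | nil =>
    cases n <;> simp [Walk.drop] <;>
      exact Walk.getVert_of_length_le _ (by simp)
  | cons h q ih =>
    cases n with
    | zero => simp [Walk.drop]
    | succ n =>
      intro z hz
      simp only [Walk.drop, Walk.support_copy] at hz
      simp only [support_cons, List.mem_cons]
      exact Or.inr (ih n hz)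

lemma IsPath.getVert_inj {u v : V} {p : G.Walk u v} (hp : p.IsPath) {i j : ℕ}
    (hi : i ≤ p.length) (hj : j ≤ p.length) (h : p.getVert i = p.getVert j) : i = j := by
  induction p generalizing i j with
  | nil => simp only [Walk.length_nil, Nat.le_zero] at hi hj; omega
  | cons hadj q ih =>
    rw [Walk.isPath_def, Walk.support_cons, List.nodup_cons] at hp
    cases i with
    | zero =>
      cases j with
      | zero => rfl
      | succ j =>
        exfalso
        rw [Walk.getVert_zero, Walk.getVert_cons_succ] at h
        exact hp.1 (by
          rw [Walk.mem_support_iff_exists_getVert]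
          exact ⟨j, h.symm, by simpa using hj⟩)
    | succ i =>
      cases j with
      | zero =>
        exfalso
        rw [Walk.getVert_zero, Walk.getVert_cons_succ] at h
        exact hp.1 (by
          rw [Walk.mem_support_iff_exists_getVert]
          exact ⟨i, h, by simpa using hi⟩)
      | succ j =>
        rw [Walk.getVert_cons_succ, Walk.getVert_cons_succ] at h
        have := ih ((Walk.isPath_def q).mpr hp.2) (by simpa using hi) (by simpa using hj) h
        omega

/-- A walk in `G` whose support lies in `T` yields reachability in the induced graph. -/
lemma reachable_induce_of_walk {T : Set V} {a b : V} (p : G.Walk a b)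
    (hp : ∀ z ∈ p.support, z ∈ T) :
    (G.induce T).Reachable ⟨a, hp a p.start_mem_support⟩ ⟨b, hp b p.end_mem_support⟩ := by
  induction p with
  | nil => rfl
  | @cons a c b h q ih =>
    have hc : c ∈ T := hp c (by simp)
    have hq : ∀ z ∈ q.support, z ∈ T := fun z hz => hp z (by simp [hz])
    have h1 : (G.induce T).Adj ⟨a, hp a (Walk.cons h q).start_mem_support⟩ ⟨c, hc⟩ := h
    exact (h1.reachable).trans (by convert ih hq using 2)

lemma exists_walk_of_reachable_induce {T : Set V} {a b : V} {ha : a ∈ T} {hb : b ∈ T}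
    (h : (G.induce T).Reachable ⟨a, ha⟩ ⟨b, hb⟩) :
    ∃ p : G.Walk a b, ∀ z ∈ p.support, z ∈ T := by
  obtain ⟨w⟩ := h
  refine ⟨w.map (SimpleGraph.Embedding.induce T).toHom, ?_⟩
  have key : ∀ z ∈ (w.map (SimpleGraph.Embedding.induce T).toHom).support, z ∈ T := by
    intro z hz
    rw [Walk.support_map, List.mem_map] at hz
    obtain ⟨⟨z', hz'⟩, _, rfl⟩ := hz
    exact hz'
  exact key


lemma chord_iff_of_min {x y : V} {T : Set V} {p : G.Walk x y}
    (hmem : ∀ z ∈ p.support, z ∈ T)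
    (hmin : ∀ r : G.Walk x y, (∀ z ∈ r.support, z ∈ T) → p.length ≤ r.length)
    {i j : ℕ} (hi : i ≤ p.length) (hj : j ≤ p.length) :
    G.Adj (p.getVert i) (p.getVert j) ↔ (j = i + 1 ∨ i = j + 1) := by
  have key : ∀ a b : ℕ, a < b → b ≤ p.length →
      G.Adj (p.getVert a) (p.getVert b) → b = a + 1 := by
    intro a b hab hb hadj
    by_contra hne
    have hb' : a + 1 < b := by omega
    have hr : ∀ z ∈ ((wtake p a).append (Walk.cons hadj (p.drop b))).support, z ∈ T := by
      intro z hz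
      rw [Walk.mem_support_append_iff] at hz
      rcases hz with hz | hz
      · exact hmem z (support_wtake_subset p a hz)
      · rw [Walk.support_cons, List.mem_cons] at hz
        rcases hz with rfl | hz
        · exact hmem _ (by rw [Walk.mem_support_iff_exists_getVert]; exact ⟨a, rfl, by omega⟩)
        · exact hmem z (support_drop_subset p b hz)
    have hlen := hmin _ hr
    rw [Walk.length_append, Walk.length_cons, length_wtake, length_drop] at hlen
    omega
  constructor
  · intro hadj
    rcases lt_trichotomy i j with h | rfl | h
    · exact Or.inl (key i j h hj hadj)
    · exact absurd hadj (G.irrefl)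
    · exact Or.inr (key j i h hi hadj.symm)
  · rintro (rfl | rfl)
    · exact p.adj_getVert_succ (by omega)
    · exact (p.adj_getVert_succ (by omega)).symm

lemma zmod_eq_add_one_iff {n : ℕ} (hn : 1 < n) (i j : ZMod n) :
    j = i + 1 ↔ (j.val = i.val + 1 ∨ (i.val + 1 = n ∧ j.val = 0)) := by
  haveI : NeZero n := ⟨by omega⟩
  haveI : Fact (1 < n) := ⟨hn⟩
  have hval : (i + 1).val = (i.val + 1) % n := by
    rw [ZMod.val_add, ZMod.val_one]
  have hi := ZMod.val_lt i
  have hj := ZMod.val_lt j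
  constructor
  · rintro rfl
    rw [hval]
    rcases Nat.lt_or_ge (i.val + 1) n with h | h
    · left; exact Nat.mod_eq_of_lt h
    · right
      have h1 : i.val + 1 = n := by omega
      simp [h1]
  · intro h
    apply ZMod.val_injective
    rw [hval]
    rcases h with h | ⟨h1, h2⟩
    · have hlt : (i.val + 1) % n = i.val + 1 := Nat.mod_eq_of_lt (by omega)
      rw [hlt, h]
    · rw [h2, h1, Nat.mod_self]

lemma two_le_length {x y : V} {p : G.Walk x y} (hne : x ≠ y) (hadj : ¬ G.Adj x y) :
    2 ≤ p.length := by
  by_contra h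
  push_neg at h
  have h01 : p.length = 0 ∨ p.length = 1 := by omega
  rcases h01 with h0 | h1
  · exact hne (by rw [← p.getVert_zero, ← h0, p.getVert_length])
  · have h2 := p.adj_getVert_succ (i := 0) (by omega)
    rw [p.getVert_zero, show (0 + 1 : ℕ) = p.length from h1.symm, p.getVert_length] at h2
    exact hadj h2

lemma not_chordal_of_paths {x y : V} {A B : Set V} {p q : G.Walk x y}
    (hxy : ¬ G.Adj x y) (hxyne : x ≠ y)
    (hxA : x ∉ A) (hxB : x ∉ B) (hyA : y ∉ A) (hyB : y ∉ B)
    (hABdisj : ∀ z, z ∈ A → z ∈ B → False)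
    (hABadj : ∀ a ∈ A, ∀ b ∈ B, ¬ G.Adj a b)
    (hp : p.IsPath) (hq : q.IsPath)
    (hpA : ∀ k, 0 < k → k < p.length → p.getVert k ∈ A)
    (hqB : ∀ k, 0 < k → k < q.length → q.getVert k ∈ B)
    (hpc : ∀ i j, i ≤ p.length → j ≤ p.length →
      (G.Adj (p.getVert i) (p.getVert j) ↔ (j = i + 1 ∨ i = j + 1)))
    (hqc : ∀ i j, i ≤ q.length → j ≤ q.length →
      (G.Adj (q.getVert i) (q.getVert j) ↔ (j = i + 1 ∨ i = j + 1))) :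
    ¬ Chordal G := by
  have hL2 : 2 ≤ p.length := two_le_length hxyne hxy
  have hM2 : 2 ≤ q.length := two_le_length hxyne hxy
  set n := p.length + q.length with hn
  set fv : ℕ → V := fun a => if a ≤ p.length then p.getVert a else q.getVert (n - a) with hfv
  -- value of fv on the q-side
  have hfvq : ∀ a, p.length ≤ a → fv a = q.getVert (n - a) := by
    intro a ha
    rcases eq_or_lt_of_le ha with rfl | hlt
    · simp only [hfv, if_pos le_rfl]
      rw [p.getVert_length, show n - p.length = q.length from by omega, q.getVert_length]
    · simp only [hfv, if_neg (by omega : ¬ a ≤ p.length)]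
  have hfv0 : fv 0 = x := by simp [hfv]
  -- injectivity on [0, n)
  have hinj : ∀ a b, a ≤ b → b < n → fv a = fv b → a = b := by
    intro a b hab hb hfab
    by_cases hbL : b ≤ p.length
    · have haL : a ≤ p.length := le_trans hab hbL
      simp only [hfv, if_pos haL, if_pos hbL] at hfab
      exact IsPath.getVert_inj hp haL hbL hfab
    · by_cases haL : a ≤ p.length
      · exfalso
        have hbB : fv b ∈ B := by
          simp only [hfv, if_neg hbL]
          exact hqB (n - b) (by omega) (by omega)
        rw [← hfab] at hbB
        rcases Nat.eq_zero_or_pos a with rfl | hapos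
        · rw [hfv0] at hbB; exact hxB hbB
        · rcases eq_or_lt_of_le haL with ha' | haL'
          · have : fv a = y := by
              simp only [hfv, if_pos haL]
              rw [ha', p.getVert_length]
            rw [this] at hbB
            exact hyB hbB
          · have : fv a ∈ A := by
              simp only [hfv, if_pos haL]
              exact hpA a hapos haL'
            exact hABdisj _ this hbB
      · simp only [hfv, if_neg haL, if_neg hbL] at hfab
        have := IsPath.getVert_inj hq (show n - a ≤ q.length from by omega)
          (show n - b ≤ q.length from by omega) hfab
        omega
  -- adjacency characterization on [0, n)
  have hadjkey : ∀ a b, a ≤ b → b < n →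
      (G.Adj (fv a) (fv b) ↔ (b = a + 1 ∨ (a = 0 ∧ b + 1 = n))) := by
    intro a b hab hb
    by_cases hbL : b ≤ p.length
    · have haL : a ≤ p.length := le_trans hab hbL
      simp only [hfv, if_pos haL, if_pos hbL]
      rw [hpc a b haL hbL]
      omega
    · by_cases haL : p.length ≤ a
      · rw [hfvq a haL, hfvq b (by omega)]
        rw [hqc (n - a) (n - b) (by omega) (by omega)]
        omega
      · -- a < p.length < b
        push_neg at haL
        have hbB : n - b < q.length ∧ 0 < n - b := by omega
        rcases Nat.eq_zero_or_pos a with rfl | hapos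
        · rw [hfv0, show fv b = q.getVert (n - b) from hfvq b (by omega)]
          have h0 := hqc 0 (n - b) (by omega) (by omega)
          rw [q.getVert_zero] at h0
          rw [h0]
          omega
        · have haA : fv a ∈ A := by
            simp only [hfv, if_pos (le_of_lt haL)]
            exact hpA a hapos haL
          have hbB' : fv b ∈ B := by
            rw [hfvq b (by omega)]
            exact hqB (n - b) (by omega) (by omega)
          constructor
          · intro h; exact absurd h (hABadj _ haA _ hbB')
          · intro h; omega
  -- build the induced cycle
  intro hch
  haveI : NeZero n := ⟨by omega⟩
  apply hch n (by omega)
  refine ⟨fun i => fv i.val, ?_, ?_⟩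
  · intro i j hij
    simp only at hij
    rcases le_total i.val j.val with h | h
    · exact ZMod.val_injective _ (hinj _ _ h (ZMod.val_lt j) hij)
    · exact (ZMod.val_injective _ (hinj _ _ h (ZMod.val_lt i) hij.symm)).symm
  · intro i j
    show G.Adj (fv i.val) (fv j.val) ↔ _
    have hi := ZMod.val_lt i
    have hj := ZMod.val_lt j
    rw [zmod_eq_add_one_iff (by omega) i j, zmod_eq_add_one_iff (by omega) j i]
    rcases le_total i.val j.val with h | h
    · rw [hadjkey i.val j.val h hj]
      omega
    · rw [G.adj_comm, hadjkey j.val i.val h hi]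
      omega

lemma reachable_getVert {T : Set V} {a b : V} {p : G.Walk a b}
    (hp : ∀ z ∈ p.support, z ∈ T) (k : ℕ) (hk : k ≤ p.length)
    (ha : a ∈ T) (hz : p.getVert k ∈ T) :
    (G.induce T).Reachable ⟨a, ha⟩ ⟨p.getVert k, hz⟩ := by
  have := reachable_induce_of_walk (G := G) (T := T) (wtake p k)
    (fun z hz => hp z (support_wtake_subset p k hz))
  exact this

lemma exists_adj_root_side {S : Set V} {u w z : V} {hu : u ∈ Sᶜ} {hw : w ∈ Sᶜ} (hz : z ∈ S)
    (hsep : ¬ (G.induce Sᶜ).Reachable ⟨u, hu⟩ ⟨w, hw⟩)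
    {hu' : u ∈ (S \ {z})ᶜ} {hw' : w ∈ (S \ {z})ᶜ}
    (hre : (G.induce (S \ {z})ᶜ).Reachable ⟨u, hu'⟩ ⟨w, hw'⟩) :
    ∃ a, ∃ ha : a ∈ Sᶜ, (G.induce Sᶜ).Reachable ⟨u, hu⟩ ⟨a, ha⟩ ∧ G.Adj a z := by
  classical
  obtain ⟨W0, hW0⟩ := exists_walk_of_reachable_induce hre
  set W := W0.bypass with hW
  have hWsup : ∀ v ∈ W.support, v ∈ (S \ {z})ᶜ :=
    fun v hv => hW0 v (W0.support_bypass_subset hv)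
  have hWpath : W.IsPath := W0.bypass_isPath
  have hzW : z ∈ W.support := by
    by_contra hzW
    apply hsep
    have hsub : ∀ v ∈ W.support, v ∈ Sᶜ := by
      intro v hv
      have h1 := hWsup v hv
      simp only [Set.mem_compl_iff, Set.mem_diff, Set.mem_singleton_iff, not_and, not_not] at h1 ⊢
      intro hvS
      exact hzW ((h1 hvS) ▸ hv)
    exact reachable_induce_of_walk W hsub
  set t := W.takeUntil z hzW with ht
  have htpath : t.IsPath := hWpath.takeUntil hzW
  have htlen : 1 ≤ t.length := by
    by_contra h
    push_neg at h
    have h0 : t.length = 0 := by omega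
    have : u = z := by rw [← t.getVert_zero, ← h0, t.getVert_length]
    exact hu (this ▸ hz)
  have hlast : t.getVert (t.length - 1 + 1) = z := by
    rw [show t.length - 1 + 1 = t.length from by omega, t.getVert_length]
  have hadj : G.Adj (t.getVert (t.length - 1)) z := by
    have := t.adj_getVert_succ (i := t.length - 1) (by omega)
    rwa [hlast] at this
  have htsup : ∀ v ∈ t.support, v ∈ (S \ {z})ᶜ :=
    fun v hv => hWsup v (W.support_takeUntil_subset hzW hv)
  -- the truncated walk avoids z entirely
  have ht' : ∀ v ∈ (wtake t (t.length - 1)).support, v ∈ Sᶜ := by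
    intro v hv
    have hvS' := htsup v (support_wtake_subset _ _ hv)
    rw [Walk.mem_support_iff_exists_getVert] at hv
    obtain ⟨r, hr, hrle⟩ := hv
    rw [length_wtake] at hrle
    have hrle' : r ≤ t.length - 1 := le_trans hrle (min_le_left _ _)
    rw [getVert_wtake t _ r hrle'] at hr
    have hvz : v ≠ z := by
      rintro rfl
      have : r = t.length := IsPath.getVert_inj htpath (by omega) le_rfl
        (by rw [hr, t.getVert_length])
      omega
    simp only [Set.mem_compl_iff, Set.mem_diff, Set.mem_singleton_iff, not_and, not_not] at hvS'
    intro hvS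
    exact hvz (hvS' hvS)
  have haS : t.getVert (t.length - 1) ∈ Sᶜ := by
    apply ht' _
    rw [Walk.mem_support_iff_exists_getVert]
    refine ⟨t.length - 1, ?_, by simp⟩
    exact getVert_wtake t _ _ le_rfl
  refine ⟨t.getVert (t.length - 1), haS, ?_, hadj⟩
  exact reachable_induce_of_walk (wtake t (t.length - 1)) ht'

lemma exists_good_path {x y : V} {C : Set V} (hxC : x ∉ C) (hyC : y ∉ C)
    (hne : x ≠ y) (hnadj : ¬ G.Adj x y)
    (hconn : ∀ a ∈ C, ∀ b ∈ C, ∃ r : G.Walk a b, ∀ z ∈ r.support, z ∈ C)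
    (hax : ∃ a ∈ C, G.Adj x a) (hay : ∃ a ∈ C, G.Adj y a) :
    ∃ p : G.Walk x y, p.IsPath ∧ (∀ k, 0 < k → k < p.length → p.getVert k ∈ C) ∧
      ∀ i j, i ≤ p.length → j ≤ p.length →
        (G.Adj (p.getVert i) (p.getVert j) ↔ (j = i + 1 ∨ i = j + 1)) := by
  classical
  set T : Set V := insert x (insert y C) with hT
  obtain ⟨a, haC, hxa⟩ := hax
  obtain ⟨a', ha'C, hya⟩ := hay
  obtain ⟨r0, hr0⟩ := hconn a haC a' ha'C
  have hP : ∃ m, ∃ r : G.Walk x y, r.length = m ∧ ∀ z ∈ r.support, z ∈ T := by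
    refine ⟨_, Walk.cons hxa (r0.append (Walk.cons hya.symm Walk.nil)), rfl, ?_⟩
    intro z hz
    rw [Walk.support_cons, List.mem_cons] at hz
    rcases hz with rfl | hz
    · exact Set.mem_insert _ _
    · rw [Walk.mem_support_append_iff] at hz
      rcases hz with hz | hz
      · exact Set.mem_insert_of_mem _ (Set.mem_insert_of_mem _ (hr0 z hz))
      · rw [Walk.support_cons, List.mem_cons] at hz
        rcases hz with rfl | hz
        · exact Set.mem_insert_of_mem _ (Set.mem_insert_of_mem _ ha'C)
        · rw [Walk.support_nil, List.mem_singleton] at hz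
          exact hz ▸ Set.mem_insert_of_mem _ (Set.mem_insert _ _)
  obtain ⟨r, hrlen, hrT⟩ := Nat.find_spec hP
  set p := r.bypass with hp
  have hpT : ∀ z ∈ p.support, z ∈ T := fun z hz => hrT z (r.support_bypass_subset hz)
  have hmin : ∀ r' : G.Walk x y, (∀ z ∈ r'.support, z ∈ T) → p.length ≤ r'.length := by
    intro r' hr'
    calc p.length ≤ r.length := r.length_bypass_le
    _ = Nat.find hP := hrlen
    _ ≤ r'.length := Nat.find_min' hP ⟨r', rfl, hr'⟩
  have hppath : p.IsPath := r.bypass_isPath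
  refine ⟨p, hppath, ?_, fun i j hi hj => chord_iff_of_min hpT hmin hi hj⟩
  intro k hk hk'
  have hmem : p.getVert k ∈ T := hpT _ (by
    rw [Walk.mem_support_iff_exists_getVert]; exact ⟨k, rfl, by omega⟩)
  rw [hT, Set.mem_insert_iff, Set.mem_insert_iff] at hmem
  rcases hmem with h | h | h
  · exfalso
    have : k = 0 := IsPath.getVert_inj hppath (by omega) (by omega)
      (by rw [h, p.getVert_zero])
    omega
  · exfalso
    have : k = p.length := IsPath.getVert_inj hppath (by omega) le_rfl
      (by rw [h, p.getVert_length])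
    omega
  · exact h

lemma not_chordal_of_minsep_not_clique {S : Set V} (hmin : IsMinimalSeparator G S)
    (hnc : ¬ G.IsClique S) : ¬ Chordal G := by
  classical
  obtain ⟨u, w, hu, hw, hsep, hminS⟩ := hmin
  rw [SimpleGraph.isClique_iff, Set.Pairwise] at hnc
  push_neg at hnc
  obtain ⟨x, hxS, y, hyS, hxyne, hxynadj⟩ := hnc
  set A : Set V := {v : V | ∃ h : v ∈ Sᶜ, (G.induce Sᶜ).Reachable ⟨u, hu⟩ ⟨v, h⟩} with hA
  set B : Set V := {v : V | ∃ h : v ∈ Sᶜ, (G.induce Sᶜ).Reachable ⟨w, hw⟩ ⟨v, h⟩} with hB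
  have hxA : x ∉ A := fun ⟨h, _⟩ => h hxS
  have hxB : x ∉ B := fun ⟨h, _⟩ => h hxS
  have hyA : y ∉ A := fun ⟨h, _⟩ => h hyS
  have hyB : y ∉ B := fun ⟨h, _⟩ => h hyS
  have hdisj : ∀ z, z ∈ A → z ∈ B → False := by
    rintro z ⟨hz1, hr1⟩ ⟨hz2, hr2⟩
    exact hsep (hr1.trans hr2.symm)
  have hnoedge : ∀ a ∈ A, ∀ b ∈ B, ¬ G.Adj a b := by
    rintro a ⟨ha1, hr1⟩ b ⟨hb1, hr2⟩ hadj
    refine hdisj b ⟨hb1, ?_⟩ ⟨hb1, hr2⟩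
    refine hr1.trans (SimpleGraph.Adj.reachable ?_)
    exact hadj
  have hconnA : ∀ a ∈ A, ∀ b ∈ A, ∃ r : G.Walk a b, ∀ z ∈ r.support, z ∈ A := by
    rintro a ⟨ha1, hr1⟩ b ⟨hb1, hr2⟩
    obtain ⟨r, hr⟩ := exists_walk_of_reachable_induce (hr1.symm.trans hr2)
    refine ⟨r, fun z hz => ?_⟩
    rw [Walk.mem_support_iff_exists_getVert] at hz
    obtain ⟨k, hk, hkle⟩ := hz
    have hzS : r.getVert k ∈ Sᶜ := hr _ (by
      rw [Walk.mem_support_iff_exists_getVert]; exact ⟨k, rfl, hkle⟩)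
    refine hk ▸ ⟨hzS, hr1.trans (reachable_getVert hr k hkle ha1 hzS)⟩
  have hconnB : ∀ a ∈ B, ∀ b ∈ B, ∃ r : G.Walk a b, ∀ z ∈ r.support, z ∈ B := by
    rintro a ⟨ha1, hr1⟩ b ⟨hb1, hr2⟩
    obtain ⟨r, hr⟩ := exists_walk_of_reachable_induce (hr1.symm.trans hr2)
    refine ⟨r, fun z hz => ?_⟩
    rw [Walk.mem_support_iff_exists_getVert] at hz
    obtain ⟨k, hk, hkle⟩ := hz
    have hzS : r.getVert k ∈ Sᶜ := hr _ (by
      rw [Walk.mem_support_iff_exists_getVert]; exact ⟨k, rfl, hkle⟩)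
    refine hk ▸ ⟨hzS, hr1.trans (reachable_getVert hr k hkle ha1 hzS)⟩
  -- neighbors of x and y in A and B
  have hkey : ∀ z ∈ S, (∃ a ∈ A, G.Adj z a) ∧ (∃ b ∈ B, G.Adj z b) := by
    intro z hzS
    have hss : S \ {z} ⊂ S := Set.sdiff_singleton_ssubset.mpr hzS
    have hre := hminS (S \ {z}) hss
    constructor
    · obtain ⟨a, ha, hra, hadj⟩ := exists_adj_root_side (G := G) hzS hsep hre
      exact ⟨a, ⟨ha, hra⟩, hadj.symm⟩
    · obtain ⟨b, hb, hrb, hadj⟩ := exists_adj_root_side (G := G) hzS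
        (fun h => hsep h.symm) hre.symm
      exact ⟨b, ⟨hb, hrb⟩, hadj.symm⟩
  obtain ⟨p, hppath, hpA, hpc⟩ := exists_good_path hxA hyA hxyne hxynadj hconnA
    ((hkey x hxS).1) ((hkey y hyS).1)
  obtain ⟨q, hqpath, hqB, hqc⟩ := exists_good_path hxB hyB hxyne hxynadj hconnB
    ((hkey x hxS).2) ((hkey y hyS).2)
  exact not_chordal_of_paths hxynadj hxyne hxA hxB hyA hyB hdisj hnoedge
    hppath hqpath hpA hqB hpc hqc

lemma walk_hits_separator {S : Set V} {a b : V} (ha : a ∈ Sᶜ) (hb : b ∈ Sᶜ)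
    (hsep : ¬ (G.induce Sᶜ).Reachable ⟨a, ha⟩ ⟨b, hb⟩) (r : G.Walk a b) :
    ∃ z ∈ r.support, z ∈ S := by
  by_contra h
  push_neg at h
  exact hsep (reachable_induce_of_walk r (fun z hz => h z hz))

lemma exists_minimal_separator [Fintype V] {a b : V}
    (P : Set V → Prop)
    (hP : ∀ S, P S ↔ ∃ (ha : a ∈ Sᶜ) (hb : b ∈ Sᶜ), ¬ (G.induce Sᶜ).Reachable ⟨a, ha⟩ ⟨b, hb⟩)
    (S0 : Set V) (h0 : P S0) :
    ∃ S : Set V, P S ∧ ∀ S' ⊂ S, ¬ P S' := by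
  have main : ∀ m : ℕ, ∀ S : Set V, S.ncard ≤ m → P S → ∃ S₁, P S₁ ∧ ∀ S' ⊂ S₁, ¬ P S' := by
    intro m
    induction m with
    | zero =>
      intro S hS hPS
      refine ⟨S, hPS, fun S' hS' _ => ?_⟩
      have : S = ∅ := by
        rw [← Set.ncard_eq_zero (Set.toFinite S)]
        omega
      exact absurd (this ▸ hS') (by simp [Set.ssubset_def])
    | succ m ih =>
      intro S hS hPS
      by_cases h : ∃ S' ⊂ S, P S'
      · obtain ⟨S', hsub, hPS'⟩ := h
        have := Set.ncard_lt_ncard hsub (Set.toFinite S)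
        exact ih S' (by omega) hPS'
      · push_neg at h
        exact ⟨S, hPS, h⟩
  exact main S0.ncard S0 le_rfl h0

lemma cycle_walk_aux {n : ℕ} {f : ZMod n → V}
    (hadj : ∀ i j : ZMod n, G.Adj (f i) (f j) ↔ (j = i + 1 ∨ i = j + 1)) (m : ℕ) :
    ∃ W : G.Walk (f ((m + 2 : ℕ) : ZMod n)) (f ((2 : ℕ) : ZMod n)),
      ∀ z ∈ W.support, ∃ k : ℕ, 2 ≤ k ∧ k ≤ m + 2 ∧ z = f ((k : ℕ) : ZMod n) := by
  induction m with
  | zero =>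
    refine ⟨Walk.nil, ?_⟩
    intro z hz
    rw [Walk.support_nil, List.mem_singleton] at hz
    exact ⟨2, le_rfl, le_rfl, hz⟩
  | succ m ih =>
    obtain ⟨W, hW⟩ := ih
    have hadj' : G.Adj (f ((m + 1 + 2 : ℕ) : ZMod n)) (f ((m + 2 : ℕ) : ZMod n)) := by
      rw [hadj]
      right
      push_cast
      ring
    refine ⟨Walk.cons hadj' W, ?_⟩
    intro z hz
    rw [Walk.support_cons, List.mem_cons] at hz
    rcases hz with rfl | hz
    · exact ⟨m + 3, by omega, by omega, rfl⟩
    · obtain ⟨k, hk1, hk2, hk3⟩ := hW z hz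
      exact ⟨k, hk1, by omega, hk3⟩

lemma not_exists_cycle_of_minsep_clique [Fintype V]
    (hclique : ∀ S : Set V, IsMinimalSeparator G S → G.IsClique S)
    {n : ℕ} (hn : 4 ≤ n) (f : ZMod n → V) : ¬ IsInducedCycleMap G n f := by
  rintro ⟨finj, fadj⟩
  haveI : NeZero n := ⟨by omega⟩
  set F : ℕ → V := fun k => f ((k : ℕ) : ZMod n) with hF
  have modeq : ∀ k j : ℕ, ((k : ZMod n) = (j : ZMod n)) ↔ k % n = j % n := by
    intro k j
    rw [ZMod.natCast_eq_natCast_iff]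
    exact Iff.rfl
  have finjN : ∀ k j : ℕ, F k = F j → k % n = j % n := by
    intro k j h
    exact (modeq k j).mp (finj h)
  have fadjN : ∀ k j : ℕ, G.Adj (F k) (F j) ↔ (j % n = (k + 1) % n ∨ k % n = (j + 1) % n) := by
    intro k j
    rw [hF]
    simp only
    rw [fadj]
    have h1 : ((k : ZMod n) + 1) = (((k + 1 : ℕ)) : ZMod n) := by push_cast; ring
    have h2 : ((j : ZMod n) + 1) = (((j + 1 : ℕ)) : ZMod n) := by push_cast; ring
    rw [h1, h2, modeq, modeq]
  have hne : F 0 ≠ F 2 := by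
    intro h
    have := finjN 0 2 h
    rw [Nat.mod_eq_of_lt (by omega), Nat.mod_eq_of_lt (by omega)] at this
    omega
  have hnadj : ¬ G.Adj (F 0) (F 2) := by
    rw [fadjN]
    rintro (h | h) <;>
      rw [Nat.mod_eq_of_lt (by omega), Nat.mod_eq_of_lt (by omega)] at h <;> omega
  -- the trivial separator
  set P : Set V → Prop := fun S =>
    ∃ (ha : F 0 ∈ Sᶜ) (hb : F 2 ∈ Sᶜ), ¬ (G.induce Sᶜ).Reachable ⟨F 0, ha⟩ ⟨F 2, hb⟩ with hP
  have h0 : P ({F 0, F 2} : Set V)ᶜ := by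
    have ha : F 0 ∈ (({F 0, F 2} : Set V)ᶜ)ᶜ := by simp
    have hb : F 2 ∈ (({F 0, F 2} : Set V)ᶜ)ᶜ := by simp
    refine ⟨ha, hb, ?_⟩
    have hbot : G.induce ((({F 0, F 2} : Set V)ᶜ)ᶜ) = ⊥ := by
      ext ⟨s, hs⟩ ⟨t, ht⟩
      simp only [Set.mem_compl_iff, not_not, Set.mem_insert_iff, Set.mem_singleton_iff] at hs ht
      simp only [SimpleGraph.comap_adj, Function.Embedding.coe_subtype, SimpleGraph.bot_adj,
        iff_false]
      intro hadj
      rcases hs with rfl | rfl <;> rcases ht with rfl | rfl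
      · exact G.irrefl hadj
      · exact hnadj hadj
      · exact hnadj hadj.symm
      · exact G.irrefl hadj
    rw [hbot, SimpleGraph.reachable_bot]
    intro h
    exact hne (congrArg Subtype.val h)
  obtain ⟨S, hPS, hminS⟩ := exists_minimal_separator P (fun S => Iff.rfl) _ h0
  obtain ⟨ha, hb, hsep⟩ := hPS
  have hisminsep : IsMinimalSeparator G S := by
    refine ⟨F 0, F 2, ha, hb, hsep, ?_⟩
    intro S' hss
    by_contra hcon
    exact hminS S' hss ⟨_, _, hcon⟩
  have hcliq := hclique S hisminsep
  -- the short walk through F 1 shows F 1 ∈ S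
  have hW1 : G.Adj (F 0) (F 1) := by
    rw [fadjN]
    left
    rfl
  have hW2 : G.Adj (F 1) (F 2) := by
    rw [fadjN]
    left
    rfl
  have hF1S : F 1 ∈ S := by
    obtain ⟨z, hz, hzS⟩ := walk_hits_separator ha hb hsep
      (Walk.cons hW1 (Walk.cons hW2 Walk.nil))
    simp only [Walk.support_cons, Walk.support_nil, List.mem_cons, List.mem_singleton] at hz
    rcases hz with rfl | rfl | rfl | h
    · exact absurd hzS ha
    · exact hzS
    · exact absurd hzS hb
    · exact absurd h (by simp)
  -- the long walk around the other side
  obtain ⟨W, hWsup⟩ := cycle_walk_aux (G := G) fadj (n - 4 + 2)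
  have hidx : n - 4 + 2 + 2 = n := by omega
  have hcast : F (n - 4 + 2 + 2) = F 0 := by
    rw [hidx, hF]
    simp only
    rw [ZMod.natCast_self, Nat.cast_zero]
  have hWsup' : ∀ z ∈ (W.copy hcast rfl).support, ∃ k : ℕ, 2 ≤ k ∧ k ≤ n ∧ z = F k := by
    intro z hz
    rw [Walk.support_copy] at hz
    obtain ⟨k, h1, h2, h3⟩ := hWsup z hz
    exact ⟨k, h1, by omega, h3⟩
  obtain ⟨z, hz, hzS⟩ := walk_hits_separator ha hb hsep (W.copy hcast rfl)
  obtain ⟨k, hk2, hkn, rfl⟩ := hWsup' z hz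
  -- k is strictly between 2 and n
  have hkne_n : k ≠ n := by
    rintro rfl
    have : F k = F 0 := by
      rw [hF]
      simp only
      rw [ZMod.natCast_self, Nat.cast_zero]
    exact ha (this ▸ hzS)
  have hkne2 : k ≠ 2 := by
    rintro rfl
    exact hb hzS
  have hk3 : 3 ≤ k ∧ k ≤ n - 1 := by omega
  -- F 1 and F k are distinct members of the clique S
  have hne1k : F 1 ≠ F k := by
    intro h
    have := finjN 1 k h
    rw [Nat.mod_eq_of_lt (by omega), Nat.mod_eq_of_lt (by omega)] at this
    omega
  have hadj1k : G.Adj (F 1) (F k) := hcliq hF1S hzS hne1k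
  rw [fadjN] at hadj1k
  rcases hadj1k with h | h
  · rw [Nat.mod_eq_of_lt (by omega), Nat.mod_eq_of_lt (by omega)] at h
    omega
  · rw [Nat.mod_eq_of_lt (by omega)] at h
    rcases Nat.lt_or_ge (k + 1) n with hlt | hge
    · rw [Nat.mod_eq_of_lt hlt] at h
      omega
    · have : k + 1 = n := by omega
      rw [this, Nat.mod_self] at h
      omega

end ChordalAux

/-- A graph is chordal iff every minimal vertex separator is a clique. -/
theorem chordal_iff_minimal_separators_clique [Fintype V] (G : SimpleGraph V) :
    Chordal G ↔ ∀ S : Set V, IsMinimalSeparator G S → G.IsClique S := by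
  constructor
  · intro hch S hmin
    by_contra hnc
    exact ChordalAux.not_chordal_of_minsep_not_clique hmin hnc hch
  · rintro hclique n hn ⟨f, hf⟩
    exact ChordalAux.not_exists_cycle_of_minsep_clique hclique hn f hf
end

section
/- Let G be a graph and let H be a minimum chordal completion of G. Then for every vertex v of G and every clique C of H properly contained in N_H(v), there exists a vertex x ∈ V(H) \ C such that vx ∈ E(G). -/
variable {V : Type*}

/-- `H` is a chordal completion of `G`: a chordal spanning supergraph. -/
def IsChordalCompletion (G H : SimpleGraph V) : Prop :=
  G ≤ H ∧ Chordal H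

/-- `H` is a minimum chordal completion of `G`: no chordal completion has fewer edges. -/
def IsMinChordalCompletion (G H : SimpleGraph V) : Prop :=
  IsChordalCompletion G H ∧
    ∀ H' : SimpleGraph V, IsChordalCompletion G H' →
      H.edgeSet.ncard ≤ H'.edgeSet.ncard

/-- The number of fill edges of a completion `H` of `G`. -/
noncomputable def fill (G H : SimpleGraph V) : ℕ :=
  H.edgeSet.ncard - G.edgeSet.ncard

lemma zmod_cast_ne_zero {n k : ℕ} (h4 : 4 ≤ n) (hk : 0 < k) (hkn : k < n) :
    (k : ZMod n) ≠ 0 := by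
  haveI : NeZero n := ⟨by omega⟩
  intro h
  rw [ZMod.natCast_eq_zero_iff] at h
  exact absurd (Nat.le_of_dvd hk h) (by omega)

/-- In a minimum chordal completion `H` of `G`, for every vertex `v` and every clique `C`
of `H` properly contained in `N_H(v)`, some vertex outside `C` is adjacent to `v`
already in `G`. -/
theorem exists_G_neighbor_outside_clique [Fintype V] (G H : SimpleGraph V)
    (hmin : IsMinChordalCompletion G H) (v : V) (C : Set V)
    (hC : H.IsClique C) (hsub : C ⊂ H.neighborSet v) :
    ∃ x : V, x ∉ C ∧ G.Adj v x := by
  by_contra hcon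
  push_neg at hcon
  obtain ⟨⟨hGH, hch⟩, hleast⟩ := hmin
  obtain ⟨w, hwN, hwC⟩ := Set.exists_of_ssubset hsub
  set H' : SimpleGraph V :=
    { Adj := fun a b => H.Adj a b ∧ ¬(a = v ∧ b ∉ C) ∧ ¬(b = v ∧ a ∉ C)
      symm := ⟨fun a b ⟨h1, h2, h3⟩ => ⟨h1.symm, h3, h2⟩⟩
      loopless := ⟨fun a ⟨h, _, _⟩ => H.irrefl h⟩ } with hH'
  have hadj : ∀ a b, H'.Adj a b ↔
      (H.Adj a b ∧ ¬(a = v ∧ b ∉ C) ∧ ¬(b = v ∧ a ∉ C)) := fun a b => Iff.rfl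
  have hle : G ≤ H' := by
    intro a b hab
    rw [hadj]
    refine ⟨hGH hab, ?_, ?_⟩
    · rintro ⟨rfl, hbC⟩; exact hcon b hbC hab
    · rintro ⟨rfl, haC⟩; exact hcon a haC hab.symm
  have hch' : Chordal H' := by
    intro n hn ⟨f, hinj, hcyc⟩
    have h1 : (1 : ZMod n) ≠ 0 := by
      have := zmod_cast_ne_zero (n := n) (k := 1) hn (by omega) (by omega)
      simpa using this
    by_cases hv : ∃ i : ZMod n, f i = v
    · obtain ⟨i, hi⟩ := hv
      have hadjm : H'.Adj (f i) (f (i - 1)) := by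
        rw [hcyc]; right; ring
      have hadjp : H'.Adj (f i) (f (i + 1)) := by
        exact (hcyc _ _).mpr (Or.inl rfl)
      have hmem : ∀ x, H'.Adj v x → x ∈ C := by
        intro x hx
        rw [hadj] at hx
        by_contra hxC
        exact hx.2.1 ⟨rfl, hxC⟩
      have haC : f (i - 1) ∈ C := hmem _ (hi ▸ hadjm)
      have hbC : f (i + 1) ∈ C := hmem _ (hi ▸ hadjp)
      have hne : f (i - 1) ≠ f (i + 1) := by
        intro h
        have := hinj h
        have h2 : (2 : ZMod n) = 0 := by linear_combination (i + 1) - this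
        have := zmod_cast_ne_zero (n := n) (k := 2) hn (by omega) (by omega)
        simp at this
        exact this h2
      have hHab : H.Adj (f (i - 1)) (f (i + 1)) := hC haC hbC hne
      have hH'ab : H'.Adj (f (i - 1)) (f (i + 1)) := by
        rw [hadj]
        exact ⟨hHab, fun h => h.2 hbC, fun h => h.2 haC⟩
      rw [hcyc] at hH'ab
      rcases hH'ab with h | h
      · have h1' : (1 : ZMod n) = 0 := by linear_combination h - i
        exact h1 h1'
      · have h3 : (3 : ZMod n) = 0 := by linear_combination (i + 2) - h
        have := zmod_cast_ne_zero (n := n) (k := 3) hn (by omega) (by omega)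
        simp at this
        exact this h3
    · push_neg at hv
      refine hch n hn ⟨f, hinj, fun i j => ?_⟩
      rw [← hcyc i j, hadj]
      constructor
      · exact fun h => ⟨h, fun h' => hv i h'.1, fun h' => hv j h'.1⟩
      · exact fun h => h.1
  have hssub : H'.edgeSet ⊂ H.edgeSet := by
    constructor
    · intro e he
      induction e using Sym2.ind with
      | _ a b =>
        rw [SimpleGraph.mem_edgeSet] at he ⊢
        exact he.1
    · intro hsup
      have : s(v, w) ∈ H'.edgeSet := hsup (H.mem_edgeSet.mpr hwN)
      rw [SimpleGraph.mem_edgeSet, hadj] at this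
      exact this.2.1 ⟨rfl, hwC⟩
  have := hleast H' ⟨hle, hch'⟩
  exact absurd this (not_le.mpr (Set.ncard_lt_ncard hssub (Set.toFinite _)))
end

section
/- Let F be a co-bipartite graph with (A,B) a bipartition of the complement of F, let k be a nonnegative integer, and let G be the graph constructed from F, A, B and k as described. Then F has a chordal completion with at most k fill edges if and only if G has a chordal completion with at most K fill edges, where K = k + |A|(|A|−1)/2. -/
variable {V : Type*}

/-- Auxiliary relation defining the gadget graph built from a co-bipartite graph `F`
with bipartition `(A, B)` of its complement: the vertices are
`V(F) ⊕ {c_1, …, c_{K+1}} ⊕ {v}`; the edges of `F` with both endpoints in `A` are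
deleted, each `c_i` is made adjacent to every other vertex except `v`, and `v` is
adjacent exactly to the vertices of `A`. -/
def gadgetRel {α : Type*} (F : SimpleGraph α) (A : Set α) (K : ℕ) :
    (α ⊕ Fin (K + 1) ⊕ Unit) → (α ⊕ Fin (K + 1) ⊕ Unit) → Prop
  | .inl u, .inl w => F.Adj u w ∧ ¬(u ∈ A ∧ w ∈ A)
  | .inl _, .inr (.inl _) => True
  | .inr (.inl _), .inr (.inl _) => True
  | .inl a, .inr (.inr _) => a ∈ A
  | _, _ => False

/-- The gadget graph `G` of the reduction. -/
def gadgetGraph {α : Type*} (F : SimpleGraph α) (A : Set α) (K : ℕ) :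
    SimpleGraph (α ⊕ Fin (K + 1) ⊕ Unit) :=
  SimpleGraph.fromRel (gadgetRel F A K)


section Aux
variable {α β : Type*}

lemma chordal_of_inj {G : SimpleGraph α} {H : SimpleGraph β} (ι : α → β)
    (hι : Function.Injective ι) (hadj : ∀ x y, G.Adj x y ↔ H.Adj (ι x) (ι y))
    (hH : Chordal H) : Chordal G := by
  rintro n hn ⟨f, hf1, hf2⟩
  refine hH n hn ⟨fun i => ι (f i), hι.comp hf1, fun i j => ?_⟩
  rw [← hadj]; exact hf2 i j

lemma fill_eq [Finite α] {G H : SimpleGraph α} (h : G ≤ H) :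
    fill G H = (H.edgeSet \ G.edgeSet).ncard := by
  rw [fill, Set.ncard_diff (SimpleGraph.edgeSet_mono h)]

private def cyc4 (a b c d : β) : ZMod 4 → β := fun i =>
  if i = 0 then a else if i = 1 then b else if i = 2 then c else d

lemma chordal_no_c4 {H : SimpleGraph β} (hch : Chordal H)
    {a b c d : β} (hab : H.Adj a b) (hbc : H.Adj b c) (hcd : H.Adj c d) (hda : H.Adj d a)
    (hac : ¬ H.Adj a c) (hbd : ¬ H.Adj b d) (hac' : a ≠ c) (hbd' : b ≠ d) : False := by
  have d10 : (1 : ZMod 4) ≠ 0 := by decide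
  have d20 : (2 : ZMod 4) ≠ 0 := by decide
  have d21 : (2 : ZMod 4) ≠ 1 := by decide
  have d30 : (3 : ZMod 4) ≠ 0 := by decide
  have d31 : (3 : ZMod 4) ≠ 1 := by decide
  have d32 : (3 : ZMod 4) ≠ 2 := by decide
  have h0 : cyc4 a b c d 0 = a := by simp [cyc4]
  have h1 : cyc4 a b c d 1 = b := by simp [cyc4, d10]
  have h2 : cyc4 a b c d 2 = c := by simp [cyc4, d20, d21]
  have h3 : cyc4 a b c d 3 = d := by simp [cyc4, d30, d31, d32]
  have e4 : ∀ i : ZMod 4, i = 0 ∨ i = 1 ∨ i = 2 ∨ i = 3 := by decide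
  have nab := hab.ne
  have nbc := hbc.ne
  have ncd := hcd.ne
  have nda := hda.ne
  apply hch 4 le_rfl
  refine ⟨cyc4 a b c d, ?_, ?_⟩
  · intro x y hxy
    rcases e4 x with rfl | rfl | rfl | rfl <;> rcases e4 y with rfl | rfl | rfl | rfl <;>
      simp only [h0, h1, h2, h3] at hxy <;>
      first
        | rfl
        | exact absurd hxy nab
        | exact absurd hxy.symm nab
        | exact absurd hxy nbc
        | exact absurd hxy.symm nbc
        | exact absurd hxy ncd
        | exact absurd hxy.symm ncd
        | exact absurd hxy nda.symm
        | exact absurd hxy.symm nda.symm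
        | exact absurd hxy hac'
        | exact absurd hxy.symm hac'
        | exact absurd hxy hbd'
        | exact absurd hxy.symm hbd'
  · intro i j
    rcases e4 i with rfl | rfl | rfl | rfl <;> rcases e4 j with rfl | rfl | rfl | rfl <;>
      simp only [h0, h1, h2, h3] <;>
      first
        | exact iff_of_false (H.irrefl) (by decide)
        | exact iff_of_true hab (by decide)
        | exact iff_of_true hab.symm (by decide)
        | exact iff_of_true hbc (by decide)
        | exact iff_of_true hbc.symm (by decide)
        | exact iff_of_true hcd (by decide)
        | exact iff_of_true hcd.symm (by decide)
        | exact iff_of_true hda (by decide)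
        | exact iff_of_true hda.symm (by decide)
        | exact iff_of_false hac (by decide)
        | exact iff_of_false (fun h => hac h.symm) (by decide)
        | exact iff_of_false hbd (by decide)
        | exact iff_of_false (fun h => hbd h.symm) (by decide)
end Aux

def bigRel {α : Type*} (F : SimpleGraph α) (A : Set α) (K : ℕ) :
    (α ⊕ Fin (K + 1) ⊕ Unit) → (α ⊕ Fin (K + 1) ⊕ Unit) → Prop
  | .inl u, .inl w => F.Adj u w
  | .inl _, .inr (.inl _) => True
  | .inr (.inl _), .inr (.inl _) => True
  | .inl a, .inr (.inr _) => a ∈ A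
  | _, _ => False

def bigGraph {α : Type*} (F : SimpleGraph α) (A : Set α) (K : ℕ) :
    SimpleGraph (α ⊕ Fin (K + 1) ⊕ Unit) :=
  SimpleGraph.fromRel (bigRel F A K)

section AdjLemmas
variable {α : Type*} (F : SimpleGraph α) (A : Set α) (K : ℕ)

lemma g_ll (u w : α) :
    (gadgetGraph F A K).Adj (.inl u) (.inl w) ↔ F.Adj u w ∧ ¬(u ∈ A ∧ w ∈ A) := by
  simp only [gadgetGraph, SimpleGraph.fromRel_adj, gadgetRel]
  constructor
  · rintro ⟨hne, h | h⟩
    · exact h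
    · exact ⟨h.1.symm, fun hc => h.2 ⟨hc.2, hc.1⟩⟩
  · rintro ⟨h1, h2⟩
    exact ⟨fun hc => h1.ne (Sum.inl.inj hc), Or.inl ⟨h1, h2⟩⟩

lemma b_ll (u w : α) :
    (bigGraph F A K).Adj (.inl u) (.inl w) ↔ F.Adj u w := by
  simp only [bigGraph, SimpleGraph.fromRel_adj, bigRel]
  constructor
  · rintro ⟨hne, h | h⟩
    · exact h
    · exact h.symm
  · intro h
    exact ⟨fun hc => h.ne (Sum.inl.inj hc), Or.inl h⟩

lemma g_lc (u : α) (j : Fin (K + 1)) :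
    (gadgetGraph F A K).Adj (.inl u) (.inr (.inl j)) := by
  simp [gadgetGraph, SimpleGraph.fromRel_adj, gadgetRel]

lemma b_lc (u : α) (j : Fin (K + 1)) :
    (bigGraph F A K).Adj (.inl u) (.inr (.inl j)) := by
  simp [bigGraph, SimpleGraph.fromRel_adj, bigRel]

lemma g_cc (j j' : Fin (K + 1)) :
    (gadgetGraph F A K).Adj (.inr (.inl j)) (.inr (.inl j')) ↔ j ≠ j' := by
  simp [gadgetGraph, SimpleGraph.fromRel_adj, gadgetRel]

lemma b_cc (j j' : Fin (K + 1)) :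
    (bigGraph F A K).Adj (.inr (.inl j)) (.inr (.inl j')) ↔ j ≠ j' := by
  simp [bigGraph, SimpleGraph.fromRel_adj, bigRel]

lemma g_lv (a : α) (t : Unit) :
    (gadgetGraph F A K).Adj (.inl a) (.inr (.inr t)) ↔ a ∈ A := by
  simp [gadgetGraph, SimpleGraph.fromRel_adj, gadgetRel]

lemma b_lv (a : α) (t : Unit) :
    (bigGraph F A K).Adj (.inl a) (.inr (.inr t)) ↔ a ∈ A := by
  simp [bigGraph, SimpleGraph.fromRel_adj, bigRel]

lemma g_cv (j : Fin (K + 1)) (t : Unit) :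
    ¬ (gadgetGraph F A K).Adj (.inr (.inl j)) (.inr (.inr t)) := by
  simp [gadgetGraph, SimpleGraph.fromRel_adj, gadgetRel]

lemma b_cv (j : Fin (K + 1)) (t : Unit) :
    ¬ (bigGraph F A K).Adj (.inr (.inl j)) (.inr (.inr t)) := by
  simp [bigGraph, SimpleGraph.fromRel_adj, bigRel]

lemma big_v_adj {F A K} {t : Unit} {x : α ⊕ Fin (K + 1) ⊕ Unit}
    (h : (bigGraph F A K).Adj (.inr (.inr t)) x) : ∃ a ∈ A, x = Sum.inl a := by
  match x with
  | .inl a => exact ⟨a, (b_lv F A K a t).1 h.symm, rfl⟩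
  | .inr (.inl j) => exact absurd h.symm (b_cv F A K j t)
  | .inr (.inr t') => cases t; cases t'; exact absurd h (bigGraph F A K).irrefl

end AdjLemmas

section Aux2
variable {α : Type*}

lemma chordal_bigGraph (F' : SimpleGraph α) (A : Set α) (K : ℕ)
    (hA : F'.IsClique A) (hch : Chordal F') : Chordal (bigGraph F' A K) := by
  rintro n hn ⟨f, finj, fadj⟩
  haveI : NeZero n := ⟨by omega⟩
  have key : ∀ m : ℕ, 0 < m → m < n → ((m : ZMod n) ≠ 0) := by
    intro m hm hmn h
    rw [ZMod.natCast_eq_zero_iff] at h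
    exact absurd (Nat.le_of_dvd hm h) (by omega)
  have k1 : (1 : ZMod n) ≠ 0 := by have := key 1 one_pos (by omega); simpa using this
  have k2 : (2 : ZMod n) ≠ 0 := by have := key 2 (by norm_num) (by omega); simpa using this
  have k3 : (3 : ZMod n) ≠ 0 := by have := key 3 (by norm_num) (by omega); simpa using this
  by_cases hv : ∃ i, f i = Sum.inr (Sum.inr ())
  · obtain ⟨i, hi⟩ := hv
    have h₁ : (bigGraph F' A K).Adj (f i) (f (i + 1)) := (fadj i (i + 1)).2 (Or.inl rfl)
    have h₂ : (bigGraph F' A K).Adj (f i) (f (i - 1)) := (fadj i (i - 1)).2 (Or.inr (by ring))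
    rw [hi] at h₁ h₂
    obtain ⟨a, ha, hfa⟩ := big_v_adj h₁
    obtain ⟨b, hb, hfb⟩ := big_v_adj h₂
    have hne : a ≠ b := by
      rintro rfl
      have h := finj (hfa.trans hfb.symm)
      exact k2 (by linear_combination h)
    have hadj2 : (bigGraph F' A K).Adj (f (i + 1)) (f (i - 1)) := by
      rw [hfa, hfb]
      exact (b_ll F' A K a b).2 (hA ha hb hne)
    rcases (fadj _ _).1 hadj2 with h | h
    · exact k3 (by linear_combination -h)
    · exact k1 (by linear_combination h)
  · push_neg at hv
    by_cases hc : ∃ i j, f i = Sum.inr (Sum.inl j)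
    · obtain ⟨i, j, hij⟩ := hc
      have hne : f i ≠ f (i + 2) := by
        intro h
        have h2 := finj h
        exact k2 (by linear_combination -h2)
      have hadj : (bigGraph F' A K).Adj (f i) (f (i + 2)) := by
        cases hx2 : f (i + 2) with
        | inl w =>
          rw [hij]
          exact (b_lc F' A K w j).symm
        | inr x =>
          cases x with
          | inl j' =>
            rw [hij]
            refine (b_cc F' A K j j').2 ?_
            intro hjj
            apply hne
            rw [hij, hx2, hjj]
          | inr t => cases t; exact absurd hx2 (hv (i + 2))
      rcases (fadj _ _).1 hadj with h | h
      · exact k1 (by linear_combination h)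
      · exact k3 (by linear_combination -h)
    · push_neg at hc
      have hl : ∀ i, ∃ a, f i = Sum.inl a := by
        intro i
        cases hx : f i with
        | inl a => exact ⟨a, rfl⟩
        | inr x =>
          cases x with
          | inl j => exact absurd hx (hc i j)
          | inr t => cases t; exact absurd hx (hv i)
      choose g hg using hl
      apply hch n hn
      refine ⟨g, ?_, ?_⟩
      · intro x y hxy
        apply finj
        rw [hg x, hg y, hxy]
      · intro i j
        have h := fadj i j
        rw [hg i, hg j, b_ll] at h
        exact h

def Aedges (A : Set α) : Set (Sym2 α) := {e | ¬ e.IsDiag ∧ ∀ x ∈ e, x ∈ A}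

lemma aedges_subset {F : SimpleGraph α} {A : Set α} (hA : F.IsClique A) :
    Aedges A ⊆ F.edgeSet := by
  intro e he
  induction e using Sym2.ind with
  | _ x y =>
    obtain ⟨hd, hm⟩ := he
    rw [Sym2.mk_isDiag_iff] at hd
    exact hA (hm x (Sym2.mem_mk_left x y)) (hm y (Sym2.mem_mk_right x y)) hd

lemma ncard_aedges [Fintype α] (A : Set α) :
    (Aedges A).ncard = A.ncard * (A.ncard - 1) / 2 := by
  classical
  have himg : Aedges A = Sym2.map (Subtype.val : A → α) '' {e : Sym2 A | ¬ e.IsDiag} := by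
    apply Set.Subset.antisymm
    · intro e he
      induction e using Sym2.ind with
      | _ x y =>
        obtain ⟨hd, hm⟩ := he
        rw [Sym2.mk_isDiag_iff] at hd
        have hx : x ∈ A := hm x (Sym2.mem_mk_left x y)
        have hy : y ∈ A := hm y (Sym2.mem_mk_right x y)
        refine ⟨s(⟨x, hx⟩, ⟨y, hy⟩), ?_, by rw [Sym2.map_pair_eq]⟩
        simp [Sym2.mk_isDiag_iff, Subtype.ext_iff, hd]
    · rintro e ⟨e', he', rfl⟩
      induction e' using Sym2.ind with
      | _ x y =>
        rw [Sym2.map_pair_eq]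
        have hd : x ≠ y := by
          intro h
          exact he' (Sym2.mk_isDiag_iff.2 h)
        refine ⟨?_, ?_⟩
        · rw [Sym2.mk_isDiag_iff]
          exact fun h => hd (Subtype.ext h)
        · intro z hz
          rcases Sym2.mem_iff.1 hz with rfl | rfl
          exacts [x.2, y.2]
  rw [himg, Set.ncard_image_of_injective _ (Sym2.map.injective Subtype.val_injective)]
  have h2 : {e : Sym2 A | ¬ e.IsDiag}.ncard = Fintype.card {e : Sym2 A // ¬ e.IsDiag} := by
    rw [← Nat.card_coe_set_eq, Nat.card_eq_fintype_card]
    exact Fintype.card_congr (Equiv.refl _)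
  rw [h2, Sym2.card_subtype_not_diag, Nat.choose_two_right]
  have h3 : A.ncard = Fintype.card A := by
    rw [Set.ncard_eq_toFinset_card', Set.toFinset_card]
  rw [h3]

end Aux2

section Diff
variable {α : Type*} {F F' : SimpleGraph α} {A : Set α} {K : ℕ}

lemma big_diff (hle : F ≤ F') (hA : F.IsClique A) :
    (bigGraph F' A K).edgeSet \ (gadgetGraph F A K).edgeSet =
      Sym2.map Sum.inl '' ((F'.edgeSet \ F.edgeSet) ∪ Aedges A) := by
  apply Set.Subset.antisymm
  · rintro e ⟨he1, he2⟩
    induction e using Sym2.ind with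
    | _ x y =>
      rw [SimpleGraph.mem_edgeSet] at he1
      rw [SimpleGraph.mem_edgeSet] at he2
      rcases x with u | j | t <;> rcases y with w | j' | t'
      · -- inl inl
        rw [b_ll] at he1
        rw [g_ll] at he2
        push_neg at he2
        refine ⟨s(u, w), ?_, Sym2.map_pair_eq Sum.inl u w⟩
        by_cases hA2 : u ∈ A ∧ w ∈ A
        · refine Or.inr ⟨?_, ?_⟩
          · rw [Sym2.mk_isDiag_iff]; exact he1.ne
          · intro z hz
            rcases Sym2.mem_iff.1 hz with rfl | rfl
            exacts [hA2.1, hA2.2]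
        · exact Or.inl ⟨he1, fun hF => hA2 (he2 hF)⟩
      · exact absurd (g_lc F A K u j') he2
      · rw [b_lv] at he1
        exact absurd ((g_lv F A K u t').2 he1) he2
      · exact absurd (g_lc F A K w j).symm he2
      · rw [b_cc] at he1
        exact absurd ((g_cc F A K j j').2 he1) he2
      · exact absurd he1 (b_cv F' A K j t')
      · rw [SimpleGraph.adj_comm, b_lv] at he1
        exact absurd ((g_lv F A K w t).2 he1).symm he2
      · exact absurd he1.symm (b_cv F' A K j' t)
      · cases t; cases t'; exact absurd he1 (bigGraph F' A K).irrefl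
  · rintro e ⟨e', he', rfl⟩
    induction e' using Sym2.ind with
    | _ u w =>
      rw [Sym2.map_pair_eq, Set.mem_diff, SimpleGraph.mem_edgeSet, SimpleGraph.mem_edgeSet,
        b_ll, g_ll]
      rcases he' with ⟨h1, h2⟩ | ⟨hd, hm⟩
      · rw [SimpleGraph.mem_edgeSet] at h1
        rw [SimpleGraph.mem_edgeSet] at h2
        exact ⟨h1, fun hc => h2 hc.1⟩
      · rw [Sym2.mk_isDiag_iff] at hd
        have hu : u ∈ A := hm u (Sym2.mem_mk_left u w)
        have hw : w ∈ A := hm w (Sym2.mem_mk_right u w)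
        exact ⟨hle (hA hu hw hd), fun hc => hc.2 ⟨hu, hw⟩⟩

lemma diff_superset {H : SimpleGraph (α ⊕ Fin (K + 1) ⊕ Unit)}
    (hle : gadgetGraph F A K ≤ H)
    (hadj : ∀ u w, F'.Adj u w ↔ H.Adj (Sum.inl u) (Sum.inl w))
    (hAH : ∀ a ∈ A, ∀ b ∈ A, a ≠ b → H.Adj (.inl a) (.inl b)) :
    Sym2.map Sum.inl '' ((F'.edgeSet \ F.edgeSet) ∪ Aedges A) ⊆
      H.edgeSet \ (gadgetGraph F A K).edgeSet := by
  rintro e ⟨e', he', rfl⟩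
  induction e' using Sym2.ind with
  | _ u w =>
    rw [Sym2.map_pair_eq, Set.mem_diff, SimpleGraph.mem_edgeSet, SimpleGraph.mem_edgeSet, g_ll]
    rcases he' with ⟨h1, h2⟩ | ⟨hd, hm⟩
    · rw [SimpleGraph.mem_edgeSet] at h1
      rw [SimpleGraph.mem_edgeSet] at h2
      exact ⟨(hadj u w).1 h1, fun hc => h2 hc.1⟩
    · rw [Sym2.mk_isDiag_iff] at hd
      have hu : u ∈ A := hm u (Sym2.mem_mk_left u w)
      have hw : w ∈ A := hm w (Sym2.mem_mk_right u w)
      exact ⟨hAH u hu w hw hd, fun hc => hc.2 ⟨hu, hw⟩⟩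

lemma count_union [Fintype α] (hA : F.IsClique A) (hle : F ≤ F') :
    (Sym2.map (Sum.inl : α → α ⊕ Fin (K + 1) ⊕ Unit) ''
        ((F'.edgeSet \ F.edgeSet) ∪ Aedges A)).ncard =
      fill F F' + A.ncard * (A.ncard - 1) / 2 := by
  have hdisj : Disjoint (F'.edgeSet \ F.edgeSet) (Aedges A) :=
    Set.disjoint_left.2 fun e he hae => he.2 (aedges_subset hA hae)
  rw [Set.ncard_image_of_injective _ (Sym2.map.injective Sum.inl_injective),
    Set.ncard_union_eq hdisj (Set.toFinite _) (Set.toFinite _), ncard_aedges, fill_eq hle]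

end Diff

/-- `F` has a chordal completion with at most `k` fill edges iff the gadget graph `G`
has a chordal completion with at most `K = k + |A|(|A|-1)/2` fill edges. -/
theorem gadget_completion_iff {α : Type*} [Fintype α] (F : SimpleGraph α)
    (A B : Set α) (hcover : A ∪ B = Set.univ) (hdisj : Disjoint A B)
    (hA : F.IsClique A) (hB : F.IsClique B) (k K : ℕ)
    (hK : K = k + A.ncard * (A.ncard - 1) / 2) :
    (∃ F' : SimpleGraph α, IsChordalCompletion F F' ∧ fill F F' ≤ k) ↔
      (∃ H : SimpleGraph (α ⊕ Fin (K + 1) ⊕ Unit),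
        IsChordalCompletion (gadgetGraph F A K) H ∧ fill (gadgetGraph F A K) H ≤ K) := by
  constructor
  · rintro ⟨F', ⟨hle, hch⟩, hfill⟩
    have hGH : gadgetGraph F A K ≤ bigGraph F' A K := by
      have hrel : ∀ x y, gadgetRel F A K x y → bigRel F' A K x y := by
        rintro (u | j | t) (w | j' | t') h
        · exact hle h.1
        all_goals exact h
      intro x y hxy
      rw [gadgetGraph, SimpleGraph.fromRel_adj] at hxy
      rw [bigGraph, SimpleGraph.fromRel_adj]
      exact ⟨hxy.1, hxy.2.imp (hrel _ _) (hrel _ _)⟩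
    refine ⟨bigGraph F' A K, ⟨hGH, chordal_bigGraph F' A K (hA.mono hle) hch⟩, ?_⟩
    rw [fill_eq hGH, big_diff hle hA, count_union hA hle, hK]
    exact Nat.add_le_add_right hfill _
  · rintro ⟨H, ⟨hle, hch⟩, hfill⟩
    classical
    have hfill' : (H.edgeSet \ (gadgetGraph F A K).edgeSet).ncard ≤ K := by
      rw [← fill_eq hle]; exact hfill
    have hj0 : ∃ j : Fin (K + 1), ¬ H.Adj (.inr (.inl j)) (.inr (.inr ())) := by
      by_contra hcon
      push_neg at hcon
      have hinj : Function.Injective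
          (fun j : Fin (K + 1) =>
            (s(Sum.inr (Sum.inl j), Sum.inr (Sum.inr ())) :
              Sym2 (α ⊕ Fin (K + 1) ⊕ Unit))) := by
        intro j j' h
        simp only [Sym2.eq, Sym2.rel_iff', Prod.mk.injEq, Prod.swap_prod_mk] at h
        rcases h with ⟨h1, -⟩ | ⟨h1, h2⟩
        · exact Sum.inl.inj (Sum.inr.inj h1)
        · exact absurd h1 (by simp)
      have hsub : (fun j : Fin (K + 1) =>
            (s(Sum.inr (Sum.inl j), Sum.inr (Sum.inr ())) :
              Sym2 (α ⊕ Fin (K + 1) ⊕ Unit))) '' Set.univ ⊆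
          H.edgeSet \ (gadgetGraph F A K).edgeSet := by
        rintro e ⟨j, -, rfl⟩
        refine ⟨(SimpleGraph.mem_edgeSet _).2 (hcon j), ?_⟩
        rw [SimpleGraph.mem_edgeSet]
        exact g_cv F A K j ()
      have h1 : K + 1 ≤ (H.edgeSet \ (gadgetGraph F A K).edgeSet).ncard := by
        have h2 := Set.ncard_le_ncard hsub (Set.toFinite _)
        rwa [Set.ncard_image_of_injective _ hinj, Set.ncard_univ, Nat.card_eq_fintype_card,
          Fintype.card_fin] at h2
      omega
    obtain ⟨j0, hj0⟩ := hj0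
    have hAH : ∀ a ∈ A, ∀ b ∈ A, a ≠ b → H.Adj (.inl a) (.inl b) := by
      intro a ha b hb hab
      by_contra hnadj
      refine chordal_no_c4 hch (a := Sum.inr (Sum.inr ())) (b := Sum.inl a)
        (c := Sum.inr (Sum.inl j0)) (d := Sum.inl b) ?_ ?_ ?_ ?_ ?_ ?_ ?_ ?_
      · exact hle ((g_lv F A K a ()).2 ha).symm
      · exact hle (g_lc F A K a j0)
      · exact hle (g_lc F A K b j0).symm
      · exact hle ((g_lv F A K b ()).2 hb)
      · exact fun h => hj0 h.symm
      · exact fun h => hnadj h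
      · simp
      · simp [hab]
    set F' : SimpleGraph α :=
      { Adj := fun u w => H.Adj (.inl u) (.inl w)
        symm := ⟨fun u w h => h.symm⟩
        loopless := ⟨fun u h => H.irrefl h⟩ } with hF'def
    have hadjF' : ∀ u w, F'.Adj u w ↔ H.Adj (Sum.inl u) (Sum.inl w) := fun _ _ => Iff.rfl
    have hFF' : F ≤ F' := by
      intro u w h
      by_cases hA2 : u ∈ A ∧ w ∈ A
      · exact hAH u hA2.1 w hA2.2 h.ne
      · exact hle ((g_ll F A K u w).2 ⟨h, hA2⟩)
    have hchF' : Chordal F' := chordal_of_inj Sum.inl Sum.inl_injective hadjF' hch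
    refine ⟨F', ⟨hFF', hchF'⟩, ?_⟩
    have hsub := diff_superset (F' := F') hle hadjF' hAH
    have h2 := Set.ncard_le_ncard hsub (Set.toFinite _)
    rw [count_union hA hFF'] at h2
    have h3 : fill F F' + A.ncard * (A.ncard - 1) / 2 ≤ K := h2.trans hfill'
    set C := A.ncard * (A.ncard - 1) / 2
    omega
end

section
/- Let F be a co-bipartite graph with (A,B) a bipartition of the complement of F, let k be a nonnegative integer, and let G be the graph constructed from F, A, B and k as described, with K = k + |A|(|A|−1)/2. If H is a chordal completion of G with at most K fill edges, then A is a clique of H. -/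
variable {V : Type*}

/-- If `H` is a chordal completion of the gadget graph `G` with at most
`K = k + |A|(|A|-1)/2` fill edges, then `A` is a clique of `H`. -/
theorem gadget_completion_A_clique {α : Type*} [Fintype α] (F : SimpleGraph α)
    (A B : Set α) (hcover : A ∪ B = Set.univ) (hdisj : Disjoint A B)
    (hA : F.IsClique A) (hB : F.IsClique B) (k K : ℕ)
    (hK : K = k + A.ncard * (A.ncard - 1) / 2)
    (H : SimpleGraph (α ⊕ Fin (K + 1) ⊕ Unit))
    (hcomp : IsChordalCompletion (gadgetGraph F A K) H)
    (hfill : fill (gadgetGraph F A K) H ≤ K) :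
    H.IsClique (Sum.inl '' A) := by
  classical
  obtain ⟨hle, hchord⟩ := hcomp
  rintro _ ⟨a, ha, rfl⟩ _ ⟨a', ha', rfl⟩ hne
  by_contra hnadj
  have hane : a ≠ a' := fun h => hne (by rw [h])
  set vv : α ⊕ Fin (K + 1) ⊕ Unit := Sum.inr (Sum.inr ()) with hvv
  -- basic adjacencies in G (hence in H)
  have hva : H.Adj vv (Sum.inl a) := by
    apply hle
    simp [gadgetGraph, gadgetRel, hvv, ha]
  have hva' : H.Adj vv (Sum.inl a') := by
    apply hle
    simp [gadgetGraph, gadgetRel, hvv, ha']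
  have hac : ∀ i : Fin (K + 1), H.Adj (Sum.inl a) (Sum.inr (Sum.inl i)) := by
    intro i; apply hle; simp [gadgetGraph, gadgetRel]
  have ha'c : ∀ i : Fin (K + 1), H.Adj (Sum.inl a') (Sum.inr (Sum.inl i)) := by
    intro i; apply hle; simp [gadgetGraph, gadgetRel]
  -- every v-c_i edge must be in H
  have key : ∀ i : Fin (K + 1), H.Adj vv (Sum.inr (Sum.inl i)) := by
    intro i
    by_contra hvc
    apply hchord 4 le_rfl
    have hca : ¬ H.Adj (Sum.inr (Sum.inl i)) vv := fun h => hvc (H.adj_symm h)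
    have ha'a : ¬ H.Adj (Sum.inl a') (Sum.inl a) := fun h => hnadj (H.adj_symm h)
    have d10 : (1 : ZMod 4) ≠ 0 := by decide
    have d20 : (2 : ZMod 4) ≠ 0 := by decide
    have d30 : (3 : ZMod 4) ≠ 0 := by decide
    have d21 : (2 : ZMod 4) ≠ 1 := by decide
    have d31 : (3 : ZMod 4) ≠ 1 := by decide
    have d32 : (3 : ZMod 4) ≠ 2 := by decide
    have d01 : (0 : ZMod 4) ≠ 1 := by decide
    have d02 : (0 : ZMod 4) ≠ 2 := by decide
    have d03 : (0 : ZMod 4) ≠ 3 := by decide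
    have d12 : (1 : ZMod 4) ≠ 2 := by decide
    have d13 : (1 : ZMod 4) ≠ 3 := by decide
    have d23 : (2 : ZMod 4) ≠ 3 := by decide
    have e0 : (0 : ZMod 4) + 1 = 1 := by decide
    have e1 : (1 : ZMod 4) + 1 = 2 := by decide
    have e2 : (2 : ZMod 4) + 1 = 3 := by decide
    have e3 : (3 : ZMod 4) + 1 = 0 := by decide
    have h4 : ∀ z : ZMod 4, z = 0 ∨ z = 1 ∨ z = 2 ∨ z = 3 := by decide
    refine ⟨fun j : ZMod 4 =>
      if j = 0 then vv else if j = 1 then Sum.inl a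
      else if j = 2 then Sum.inr (Sum.inl i) else Sum.inl a', ?_, ?_⟩
    · intro x y hxy
      rcases h4 x with rfl | rfl | rfl | rfl <;> rcases h4 y with rfl | rfl | rfl | rfl <;> revert hxy <;>
        simp (config := { decide := true }) [hvv, hane, hane.symm,
          d10, d20, d30, d21, d31, d32, d01, d02, d03, d12, d13, d23,
          e0, e1, e2, e3]
    · intro x y
      rcases h4 x with rfl | rfl | rfl | rfl <;> rcases h4 y with rfl | rfl | rfl | rfl <;>
        simp (config := { decide := true }) [hva, hva', hac i, ha'c i,
          d10, d20, d30, d21, d31, d32, d01, d02, d03, d12, d13, d23,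
          e0, e1, e2, e3,
          (hac i).symm, (ha'c i).symm, hva.symm, hva'.symm, hnadj, hvc,
          hca, ha'a] <;> (try decide)
  -- counting
  set G := gadgetGraph F A K with hG
  have hnotG : ∀ i : Fin (K + 1), ¬ G.Adj vv (Sum.inr (Sum.inl i)) := by
    intro i
    simp [hG, gadgetGraph, gadgetRel, hvv]
  set e : Fin (K + 1) → Sym2 (α ⊕ Fin (K + 1) ⊕ Unit) :=
    fun i => s(vv, Sum.inr (Sum.inl i)) with he
  have heinj : Function.Injective e := by
    intro i j hij
    simp only [he, Sym2.eq, Sym2.rel_iff', Prod.mk.injEq, Prod.swap_prod_mk, hvv] at hij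
    rcases hij with ⟨-, h⟩ | ⟨h, -⟩ <;> simp_all
  have hsub : G.edgeSet ∪ Set.range e ⊆ H.edgeSet := by
    apply Set.union_subset
    · exact fun x hx => SimpleGraph.edgeSet_mono hle hx
    · rintro _ ⟨i, rfl⟩
      exact (key i)
  have hdisj2 : Disjoint G.edgeSet (Set.range e) := by
    rw [Set.disjoint_right]
    rintro _ ⟨i, rfl⟩ hmem
    exact hnotG i hmem
  have hcard : (Set.range e).ncard = K + 1 := by
    rw [← Set.image_univ, Set.ncard_image_of_injective _ heinj, Set.ncard_univ]
    simp
  have hfin : (Set.range e).Finite := Set.finite_range e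
  have hGfin : G.edgeSet.Finite := Set.toFinite _
  have hHfin : H.edgeSet.Finite := Set.toFinite _
  have hle2 : G.edgeSet.ncard + (K + 1) ≤ H.edgeSet.ncard := by
    calc G.edgeSet.ncard + (K + 1)
        = (G.edgeSet ∪ Set.range e).ncard := by
          rw [Set.ncard_union_eq hdisj2 hGfin hfin, hcard]
      _ ≤ H.edgeSet.ncard := Set.ncard_le_ncard hsub hHfin
  have : fill G H ≥ K + 1 := by
    unfold fill
    omega
  omega
end

section
/- Let F be a co-bipartite graph with (A,B) a bipartition of the complement of F, let k be a nonnegative integer, and let G be the graph constructed from F, A, B and k as described, with K = k + |A|(|A|−1)/2 and C = {c_1, …, c_{K+1}}. If H is a minimum chordal completion of G and fill(H) ≤ K, then no fill edge of H has an endpoint in C ∪ {v}; in particular N_H(v) = N_G(v) = A. -/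
variable {V : Type*}

/-! ### Auxiliary lemmas -/

lemma not_chordal_of_4cycle' (H : SimpleGraph V) (w0 w1 w2 w3 : V)
    (h01 : H.Adj w0 w1) (h12 : H.Adj w1 w2) (h23 : H.Adj w2 w3) (h30 : H.Adj w3 w0)
    (h02 : ¬H.Adj w0 w2) (h13 : ¬H.Adj w1 w3)
    (n02 : w0 ≠ w2) (n13 : w1 ≠ w3) (hC : Chordal H) : False := by
  have hcase : ∀ i : ZMod 4, i = 0 ∨ i = 1 ∨ i = 2 ∨ i = 3 := by decide
  apply hC 4 le_rfl
  refine ⟨(![w0, w1, w2, w3] : ZMod 4 → V), ?_, ?_⟩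
  · have d01 : w0 ≠ w1 := h01.ne
    have d10 : w1 ≠ w0 := h01.ne'
    have d12 : w1 ≠ w2 := h12.ne
    have d21 : w2 ≠ w1 := h12.ne'
    have d23 : w2 ≠ w3 := h23.ne
    have d32 : w3 ≠ w2 := h23.ne'
    have d30 : w3 ≠ w0 := h30.ne
    have d03 : w0 ≠ w3 := h30.ne'
    have n20 : w2 ≠ w0 := n02.symm
    have n31 : w3 ≠ w1 := n13.symm
    intro i i' h
    rcases hcase i with rfl|rfl|rfl|rfl <;> rcases hcase i' with rfl|rfl|rfl|rfl <;>
      first | rfl | exact absurd h (by assumption)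
  · have c10 := h01.symm
    have c21 := h12.symm
    have c32 := h23.symm
    have c03 := h30.symm
    have c20 : ¬H.Adj w2 w0 := fun h => h02 h.symm
    have c31 : ¬H.Adj w3 w1 := fun h => h13 h.symm
    intro i i'
    rcases hcase i with rfl|rfl|rfl|rfl <;> rcases hcase i' with rfl|rfl|rfl|rfl <;>
      first
      | exact iff_of_true h01 (by decide) | exact iff_of_true c10 (by decide)
      | exact iff_of_true h12 (by decide) | exact iff_of_true c21 (by decide)
      | exact iff_of_true h23 (by decide) | exact iff_of_true c32 (by decide)
      | exact iff_of_true h30 (by decide) | exact iff_of_true c03 (by decide)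
      | exact iff_of_false h02 (by decide) | exact iff_of_false c20 (by decide)
      | exact iff_of_false h13 (by decide) | exact iff_of_false c31 (by decide)
      | exact iff_of_false (H.loopless.irrefl w0) (by decide)
      | exact iff_of_false (H.loopless.irrefl w1) (by decide)
      | exact iff_of_false (H.loopless.irrefl w2) (by decide)
      | exact iff_of_false (H.loopless.irrefl w3) (by decide)

/-- The graph `H` with all edges at `v` going outside of `N` removed. -/
def pruneAt (H : SimpleGraph V) (v : V) (N : Set V) : SimpleGraph V where
  Adj x y := H.Adj x y ∧ (x = v → y ∈ N) ∧ (y = v → x ∈ N)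
  symm := ⟨fun x y ⟨h, h1, h2⟩ => ⟨h.symm, h2, h1⟩⟩
  loopless := ⟨fun x h => H.loopless.irrefl x h.1⟩

lemma pruneAt_le (H : SimpleGraph V) (v : V) (N : Set V) : pruneAt H v N ≤ H :=
  fun _ _ h => h.1

lemma zmod_cast_ne_zero_s6 {n m : ℕ} (hn : 4 ≤ n) (hm : 0 < m) (hm4 : m ≤ 3) :
    ((m : ℕ) : ZMod n) ≠ 0 := by
  have hnz : NeZero n := ⟨by omega⟩
  intro h
  have h2 := (ZMod.natCast_eq_zero_iff m n).mp h
  have := Nat.le_of_dvd hm h2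
  omega

lemma chordal_pruneAt (H : SimpleGraph V) (hC : Chordal H) (v : V) (N : Set V)
    (hvN : v ∉ N) (hclq : ∀ x y : V, x ∈ N → y ∈ N → x ≠ y → H.Adj x y) :
    Chordal (pruneAt H v N) := by
  intro n hn ⟨f, finj, fadj⟩
  by_cases hvf : ∃ i0, f i0 = v
  · obtain ⟨i0, hi0⟩ := hvf
    have h1 : (pruneAt H v N).Adj (f i0) (f (i0 + 1)) := (fadj i0 (i0 + 1)).mpr (Or.inl rfl)
    have h2 : (pruneAt H v N).Adj (f (i0 - 1)) (f i0) :=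
      (fadj (i0 - 1) i0).mpr (Or.inl (by ring))
    have hm1 : f (i0 + 1) ∈ N := h1.2.1 hi0
    have hm2 : f (i0 - 1) ∈ N := h2.2.2 hi0
    have hne : f (i0 + 1) ≠ f (i0 - 1) := by
      intro h
      have h' : i0 + 1 = i0 - 1 := finj h
      have h2z : ((2 : ℕ) : ZMod n) = 0 := by push_cast; linear_combination h'
      exact zmod_cast_ne_zero_s6 hn (by norm_num) (by norm_num) h2z
    have hadj : (pruneAt H v N).Adj (f (i0 + 1)) (f (i0 - 1)) := by
      refine ⟨hclq _ _ hm1 hm2 hne, fun hx => (hvN (hx ▸ hm1)).elim,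
        fun hy => (hvN (hy ▸ hm2)).elim⟩
    rcases (fadj (i0 + 1) (i0 - 1)).mp hadj with h | h
    · have h3z : ((3 : ℕ) : ZMod n) = 0 := by push_cast; linear_combination -h
      exact zmod_cast_ne_zero_s6 hn (by norm_num) (by norm_num) h3z
    · have h1z : ((1 : ℕ) : ZMod n) = 0 := by push_cast; linear_combination h
      exact zmod_cast_ne_zero_s6 hn (by norm_num) (by norm_num) h1z
  · push_neg at hvf
    refine hC n hn ⟨f, finj, fun i j => ?_⟩
    constructor
    · intro h
      exact (fadj i j).mp ⟨h, fun hx => absurd hx (hvf i), fun hy => absurd hy (hvf j)⟩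
    · intro h
      exact ((fadj i j).mpr h).1

section GadgetFacts
variable {α : Type*} (F : SimpleGraph α) (A : Set α) (K : ℕ)

lemma gadget_adj_va (a : α) :
    (gadgetGraph F A K).Adj (Sum.inr (Sum.inr ())) (Sum.inl a) ↔ a ∈ A := by
  simp [gadgetGraph, gadgetRel, SimpleGraph.fromRel_adj]

lemma gadget_adj_ac (a : α) (i : Fin (K + 1)) :
    (gadgetGraph F A K).Adj (Sum.inl a) (Sum.inr (Sum.inl i)) := by
  simp [gadgetGraph, gadgetRel, SimpleGraph.fromRel_adj]

lemma gadget_adj_cc {i j : Fin (K + 1)} (h : i ≠ j) :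
    (gadgetGraph F A K).Adj (Sum.inr (Sum.inl i)) (Sum.inr (Sum.inl j)) := by
  simp [gadgetGraph, gadgetRel, SimpleGraph.fromRel_adj, h]

lemma gadget_not_adj_vc (i : Fin (K + 1)) :
    ¬ (gadgetGraph F A K).Adj (Sum.inr (Sum.inr ())) (Sum.inr (Sum.inl i)) := by
  simp [gadgetGraph, gadgetRel, SimpleGraph.fromRel_adj]

lemma gadget_adj_v (y : α ⊕ Fin (K + 1) ⊕ Unit) :
    (gadgetGraph F A K).Adj (Sum.inr (Sum.inr ())) y → ∃ a ∈ A, y = Sum.inl a := by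
  obtain (u | i | u) := y <;> simp [gadgetGraph, gadgetRel, SimpleGraph.fromRel_adj]

end GadgetFacts

/-- If `H` is a minimum chordal completion of the gadget graph `G` with at most `K`
fill edges, then no fill edge of `H` has an endpoint in `C ∪ {v}` (i.e. both endpoints
of every fill edge are vertices of `F`); in particular `N_H(v) = N_G(v) = A`. -/

theorem gadget_min_completion_no_fill_at_C_v {α : Type*} [Fintype α] (F : SimpleGraph α)
    (A B : Set α) (hcover : A ∪ B = Set.univ) (hdisj : Disjoint A B)
    (hA : F.IsClique A) (hB : F.IsClique B) (k K : ℕ)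
    (hK : K = k + A.ncard * (A.ncard - 1) / 2)
    (H : SimpleGraph (α ⊕ Fin (K + 1) ⊕ Unit))
    (hmin : IsMinChordalCompletion (gadgetGraph F A K) H)
    (hfill : fill (gadgetGraph F A K) H ≤ K) :
    (∀ x y : α ⊕ Fin (K + 1) ⊕ Unit, H.Adj x y → ¬ (gadgetGraph F A K).Adj x y →
      (∃ u : α, x = Sum.inl u) ∧ (∃ u : α, y = Sum.inl u)) ∧
    H.neighborSet (Sum.inr (Sum.inr ())) = Sum.inl '' A ∧
    (gadgetGraph F A K).neighborSet (Sum.inr (Sum.inr ())) = Sum.inl '' A := by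
  classical
  obtain ⟨⟨hle, hchord⟩, hminimal⟩ := hmin
  set vv : α ⊕ Fin (K + 1) ⊕ Unit := Sum.inr (Sum.inr ()) with hvv
  -- Step 1: some c_j is not an H-neighbor of v
  have hj : ∃ j : Fin (K + 1), ¬ H.Adj vv (Sum.inr (Sum.inl j)) := by
    by_contra hc
    push_neg at hc
    have hsub : (gadgetGraph F A K).edgeSet ⊆ H.edgeSet := SimpleGraph.edgeSet_mono hle
    set g : Fin (K + 1) → Sym2 (α ⊕ Fin (K + 1) ⊕ Unit) :=
      fun i => s(vv, Sum.inr (Sum.inl i)) with hg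
    have hinj : Function.Injective g := by
      intro i i' h
      have := Sym2.congr_right.mp h
      simpa using this
    have himg : Set.range g ⊆ H.edgeSet \ (gadgetGraph F A K).edgeSet := by
      rintro e ⟨i, rfl⟩
      exact ⟨(SimpleGraph.mem_edgeSet H).mpr (hc i),
        fun he => gadget_not_adj_vc F A K i ((SimpleGraph.mem_edgeSet _).mp he)⟩
    have h1 : (Set.range g).ncard = K + 1 := by
      rw [← Set.image_univ, Set.ncard_image_of_injective _ hinj, Set.ncard_univ]
      simp
    have h2 : (Set.range g).ncard ≤ (H.edgeSet \ (gadgetGraph F A K).edgeSet).ncard :=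
      Set.ncard_le_ncard himg (Set.toFinite _)
    have h3 : fill (gadgetGraph F A K) H
        = (H.edgeSet \ (gadgetGraph F A K).edgeSet).ncard := by
      rw [fill, Set.ncard_diff hsub (Set.toFinite _)]
    omega
  obtain ⟨j, hj⟩ := hj
  -- Step 2: A is a clique in H
  have hclique : ∀ a a' : α, a ∈ A → a' ∈ A → a ≠ a' → H.Adj (Sum.inl a) (Sum.inl a') := by
    intro a a' ha ha' hne
    by_contra hadj
    refine not_chordal_of_4cycle' H vv (Sum.inl a) (Sum.inr (Sum.inl j)) (Sum.inl a')
      (hle ((gadget_adj_va F A K a).mpr ha))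
      (hle (gadget_adj_ac F A K a j))
      (hle (gadget_adj_ac F A K a' j).symm)
      (hle ((gadget_adj_va F A K a').mpr ha')).symm
      hj hadj (by simp [hvv]) (fun h => hne (Sum.inl.inj h)) hchord
  -- Step 3: prune the edges at v and use minimality
  set N : Set (α ⊕ Fin (K + 1) ⊕ Unit) := Sum.inl '' A with hN
  have hvN : vv ∉ N := by simp [hvv, hN]
  have hclqN : ∀ x y : α ⊕ Fin (K + 1) ⊕ Unit, x ∈ N → y ∈ N → x ≠ y → H.Adj x y := by
    rintro x y ⟨a, ha, rfl⟩ ⟨a', ha', rfl⟩ hne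
    exact hclique a a' ha ha' (fun h => hne (by rw [h]))
  have hGle'' : gadgetGraph F A K ≤ pruneAt H vv N := by
    intro x y hxy
    refine ⟨hle hxy, ?_, ?_⟩
    · rintro rfl
      obtain ⟨a, ha, rfl⟩ := gadget_adj_v F A K y hxy
      exact ⟨a, ha, rfl⟩
    · rintro rfl
      obtain ⟨a, ha, rfl⟩ := gadget_adj_v F A K x hxy.symm
      exact ⟨a, ha, rfl⟩
  have hchord'' : Chordal (pruneAt H vv N) := chordal_pruneAt H hchord vv N hvN hclqN
  have hmin'' : H.edgeSet.ncard ≤ (pruneAt H vv N).edgeSet.ncard :=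
    hminimal _ ⟨hGle'', hchord''⟩
  have heq : (pruneAt H vv N).edgeSet = H.edgeSet :=
    Set.eq_of_subset_of_ncard_le (SimpleGraph.edgeSet_mono (pruneAt_le H vv N)) hmin''
      (Set.toFinite _)
  have hHH : pruneAt H vv N = H := SimpleGraph.edgeSet_inj.mp heq
  have hNv : ∀ y, H.Adj vv y → y ∈ N := by
    intro y hy
    have hy' : (pruneAt H vv N).Adj vv y := by rw [hHH]; exact hy
    exact hy'.2.1 rfl
  -- Conclusions
  refine ⟨?_, ?_, ?_⟩
  · intro x y hxy hnxy
    obtain (u | i | ⟨⟩) := x <;> obtain (w | i' | ⟨⟩) := y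
    · exact ⟨⟨u, rfl⟩, ⟨w, rfl⟩⟩
    · exact absurd (gadget_adj_ac F A K u i') hnxy
    · obtain ⟨a, ha, hEq⟩ := hNv _ hxy.symm
      cases Sum.inl.inj hEq
      exact absurd ((gadget_adj_va F A K u).mpr ha).symm hnxy
    · exact absurd (gadget_adj_ac F A K w i).symm hnxy
    · have hii : i ≠ i' := by rintro rfl; exact hxy.ne rfl
      exact absurd (gadget_adj_cc F A K hii) hnxy
    · obtain ⟨a, ha, hEq⟩ := hNv _ hxy.symm
      exact absurd hEq (by simp)
    · obtain ⟨a, ha, hEq⟩ := hNv _ hxy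
      cases Sum.inl.inj hEq
      exact absurd ((gadget_adj_va F A K w).mpr ha) hnxy
    · obtain ⟨a, ha, hEq⟩ := hNv _ hxy
      exact absurd hEq (by simp)
    · exact absurd rfl hxy.ne
  · ext y
    simp only [SimpleGraph.mem_neighborSet]
    constructor
    · intro hy
      exact hNv y hy
    · rintro ⟨a, ha, rfl⟩
      exact hle ((gadget_adj_va F A K a).mpr ha)
  · ext y
    simp only [SimpleGraph.mem_neighborSet]
    constructor
    · intro hy
      obtain ⟨a, ha, rfl⟩ := gadget_adj_v F A K y hy
      exact ⟨a, ha, rfl⟩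
    · rintro ⟨a, ha, rfl⟩
      exact (gadget_adj_va F A K a).mpr ha
end

section
/- Let G be a graph, let H be a minimum chordal completion of G and let v be a vertex of G. If N_H(v) is a clique of H, then N_H(v) = N_G(v), i.e., no fill edge of H is incident to v. -/
variable {V : Type*}

/-- If `H` is a minimum chordal completion of `G` and `N_H(v)` is a clique of `H`,
then `N_H(v) = N_G(v)`, i.e. no fill edge is incident to `v`. -/
theorem min_completion_simplicial_no_fill [Fintype V] (G H : SimpleGraph V)
    (hmin : IsMinChordalCompletion G H) (v : V)
    (hclique : H.IsClique (H.neighborSet v)) :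
    H.neighborSet v = G.neighborSet v := by

  classical
  have hGH : G ≤ H := hmin.1.1
  by_contra hne
  -- find a fill edge at v
  have hsub : G.neighborSet v ⊆ H.neighborSet v := fun w hw => hGH hw
  obtain ⟨w, hwH, hwG⟩ : ∃ w, w ∈ H.neighborSet v ∧ w ∉ G.neighborSet v := by
    by_contra h
    push_neg at h
    exact hne (Set.Subset.antisymm hsub h).symm
  -- the graph with fill edges at v removed
  set H' : SimpleGraph V :=
    { Adj := fun a b => G.Adj a b ∨ (H.Adj a b ∧ a ≠ v ∧ b ≠ v)
      symm := by
        constructor; rintro a b (h | ⟨h, ha, hb⟩)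
        · exact Or.inl h.symm
        · exact Or.inr ⟨h.symm, hb, ha⟩
      loopless := by
        constructor; rintro a (h | ⟨h, _, _⟩)
        · exact G.loopless.irrefl a h
        · exact H.loopless.irrefl a h } with hH'def
  have hGH' : G ≤ H' := fun a b h => Or.inl h
  have hH'H : H' ≤ H := by
    rintro a b (h | ⟨h, _, _⟩)
    · exact hGH h
    · exact h
  have hchordal : Chordal H' := by
    intro n hn hex
    obtain ⟨f, hinj, hadj⟩ := hex
    haveI : NeZero n := ⟨by omega⟩
    have hk : ∀ k : ℕ, k < n → 0 < k → ((k : ZMod n) ≠ 0) := by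
      intro k hkn hk0 h
      have := (ZMod.natCast_eq_zero_iff k n).mp h
      have := Nat.le_of_dvd hk0 this
      omega
    have h1 : (1 : ZMod n) ≠ 0 := by
      have := hk 1 (by omega) (by omega); simpa using this
    have h2 : (2 : ZMod n) ≠ 0 := by
      have := hk 2 (by omega) (by omega); simpa using this
    have h3 : (3 : ZMod n) ≠ 0 := by
      have := hk 3 (by omega) (by omega); simpa using this
    by_cases hv : ∃ i, f i = v
    · obtain ⟨i, hi⟩ := hv
      have hne1 : i - 1 ≠ i := fun h => h1 (by linear_combination -h)
      have hne2 : i + 1 ≠ i := fun h => h1 (by linear_combination h)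
      have hne12 : i - 1 ≠ i + 1 := fun h => h2 (by linear_combination -h)
      have hva : H'.Adj (f i) (f (i - 1)) := (hadj i (i - 1)).mpr (Or.inr (by ring))
      have hvb : H'.Adj (f i) (f (i + 1)) := (hadj i (i + 1)).mpr (Or.inl rfl)
      have hGa : G.Adj v (f (i - 1)) := by
        rcases hva with h | ⟨_, habs, _⟩
        · rwa [hi] at h
        · exact absurd hi habs
      have hGb : G.Adj v (f (i + 1)) := by
        rcases hvb with h | ⟨_, habs, _⟩
        · rwa [hi] at h
        · exact absurd hi habs
      have hma : f (i - 1) ∈ H.neighborSet v := hGH hGa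
      have hmb : f (i + 1) ∈ H.neighborSet v := hGH hGb
      have habne : f (i - 1) ≠ f (i + 1) := fun h => hne12 (hinj h)
      have hHab : H.Adj (f (i - 1)) (f (i + 1)) := hclique hma hmb habne
      have hanv : f (i - 1) ≠ v := by
        rw [← hi]; exact fun h => hne1 (hinj h)
      have hbnv : f (i + 1) ≠ v := by
        rw [← hi]; exact fun h => hne2 (hinj h)
      have hH'ab : H'.Adj (f (i - 1)) (f (i + 1)) := Or.inr ⟨hHab, hanv, hbnv⟩
      rcases (hadj (i - 1) (i + 1)).mp hH'ab with h | h
      · exact hne2 (by linear_combination h)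
      · exact h3 (by linear_combination -h)
    · push_neg at hv
      refine hmin.1.2 n hn ⟨f, hinj, fun i j => ?_⟩
      constructor
      · intro h
        exact (hadj i j).mp (Or.inr ⟨h, hv i, hv j⟩)
      · intro h
        exact hH'H ((hadj i j).mpr h)
  have hle := hmin.2 H' ⟨hGH', hchordal⟩
  have hss : H'.edgeSet ⊂ H.edgeSet := by
    constructor
    · exact SimpleGraph.edgeSet_mono hH'H
    · intro habs
      have hmem : s(v, w) ∈ H.edgeSet := hwH
      have := habs hmem
      rw [SimpleGraph.mem_edgeSet] at this
      rcases this with h | ⟨_, habs2, _⟩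
      · exact hwG h
      · exact habs2 rfl
  have := Set.ncard_lt_ncard hss (Set.toFinite _)
  omega
end
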